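/- Let E be an elliptic curve over ℚ whose mod p Galois representation has image containing SL₂(𝔽_p) (in particular non-solvable for p ≥ 5). Then for every solvable Galois extension L/ℚ, the group of p-torsion points E[p](L) is trivial. -/

import Mathlib

open Matrix


private lemma scalar_comm {F : Type*} [Field F] {v0 v1 a b c d a' b' c' d' : F} (hv0 : v0 ≠ 0)
    (e1 : a*v0 + b*v1 = v0) (e2 : c*v0 + d*v1 = v1) (e3 : a*d - b*c = 1)
    (f1 : a'*v0 + b'*v1 = v0) (f2 : c'*v0 + d'*v1 = v1) (f3 : a'*d' - b'*c' = 1) :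
    a*a' + b*c' = a'*a + b'*c ∧ a*b' + b*d' = a'*b + b'*d ∧
    c*a' + d*c' = c'*a + d'*c ∧ c*b' + d*d' = c'*b + d'*d := by
  have h1 : a = 1 - b * v1 / v0 := by field_simp; linear_combination e1
  have h2 : d * v0 * v0 = (v0 + b * v1) * v0 := by
    linear_combination v0^2*e3 - d*v0*e1 + b*v0*e2
  have h2' : d = 1 + b * v1 / v0 := by
    field_simp
    linear_combination mul_right_cancel₀ hv0 h2
  have h3 : c = -(b * v1 * v1)/(v0*v0) := by
    field_simp
    linear_combination v0 * e2 - v1 * (mul_right_cancel₀ hv0 h2)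
  have g1 : a' = 1 - b' * v1 / v0 := by field_simp; linear_combination f1
  have g2 : d' * v0 * v0 = (v0 + b' * v1) * v0 := by
    linear_combination v0^2*f3 - d'*v0*f1 + b'*v0*f2
  have g2' : d' = 1 + b' * v1 / v0 := by
    field_simp
    linear_combination mul_right_cancel₀ hv0 g2
  have g3 : c' = -(b' * v1 * v1)/(v0*v0) := by
    field_simp
    linear_combination v0 * f2 - v1 * (mul_right_cancel₀ hv0 g2)
  subst h1 h2' h3 g1 g2' g3
  refine ⟨?_, ?_, ?_, ?_⟩ <;> field_simp <;> ring

private lemma fix_comm {F : Type*} [Field F] {v : Fin 2 → F} (hv : v ≠ 0)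
    {A B : Matrix (Fin 2) (Fin 2) F}
    (hAd : A.det = 1) (hBd : B.det = 1)
    (hA : A.mulVec v = v) (hB : B.mulVec v = v) : A * B = B * A := by
  have eA1 : A 0 0 * v 0 + A 0 1 * v 1 = v 0 := by
    simpa [Matrix.mulVec, dotProduct, Fin.sum_univ_two] using congrFun hA 0
  have eA2 : A 1 0 * v 0 + A 1 1 * v 1 = v 1 := by
    simpa [Matrix.mulVec, dotProduct, Fin.sum_univ_two] using congrFun hA 1
  have eA3 : A 0 0 * A 1 1 - A 0 1 * A 1 0 = 1 := by
    rw [← Matrix.det_fin_two]; exact hAd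
  have eB1 : B 0 0 * v 0 + B 0 1 * v 1 = v 0 := by
    simpa [Matrix.mulVec, dotProduct, Fin.sum_univ_two] using congrFun hB 0
  have eB2 : B 1 0 * v 0 + B 1 1 * v 1 = v 1 := by
    simpa [Matrix.mulVec, dotProduct, Fin.sum_univ_two] using congrFun hB 1
  have eB3 : B 0 0 * B 1 1 - B 0 1 * B 1 0 = 1 := by
    rw [← Matrix.det_fin_two]; exact hBd
  have hv01 : v 0 ≠ 0 ∨ v 1 ≠ 0 := by
    by_contra h
    push_neg at h
    exact hv (funext fun i => by fin_cases i <;> simp [h.1, h.2])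
  obtain h0 | h1 := hv01
  · obtain ⟨g1, g2, g3, g4⟩ := scalar_comm h0 eA1 eA2 eA3 eB1 eB2 eB3
    ext i j
    fin_cases i <;> fin_cases j <;> simp [Matrix.mul_apply, Fin.sum_univ_two]
    · linear_combination g1
    · linear_combination g2
    · linear_combination g3
    · linear_combination g4
  · obtain ⟨g1, g2, g3, g4⟩ := scalar_comm (v0 := v 1) (v1 := v 0)
      (a := A 1 1) (b := A 1 0) (c := A 0 1) (d := A 0 0)
      (a' := B 1 1) (b' := B 1 0) (c' := B 0 1) (d' := B 0 0) h1
      (by linear_combination eA2) (by linear_combination eA1) (by linear_combination eA3)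
      (by linear_combination eB2) (by linear_combination eB1) (by linear_combination eB3)
    ext i j
    fin_cases i <;> fin_cases j <;> simp [Matrix.mul_apply, Fin.sum_univ_two]
    · linear_combination g4
    · linear_combination g3
    · linear_combination g2
    · linear_combination g1

section SL2

variable {F : Type*} [Field F]

open scoped commutatorElement

private def E12 (a : F) : Matrix.SpecialLinearGroup (Fin 2) F :=
  ⟨!![1, a; 0, 1], by simp [Matrix.det_fin_two_of]⟩

private def E21 (a : F) : Matrix.SpecialLinearGroup (Fin 2) F :=
  ⟨!![1, 0; a, 1], by simp [Matrix.det_fin_two_of]⟩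

private lemma E12_mul (a b : F) : E12 a * E12 b = E12 (a + b) := by
  apply Subtype.ext
  show (!![1, a; 0, 1] : Matrix (Fin 2) (Fin 2) F) * !![1, b; 0, 1] = _
  rw [Matrix.mul_fin_two]
  norm_num [E12, add_comm]

private lemma E21_mul (a b : F) : E21 a * E21 b = E21 (a + b) := by
  apply Subtype.ext
  show (!![1, 0; a, 1] : Matrix (Fin 2) (Fin 2) F) * !![1, 0; b, 1] = _
  rw [Matrix.mul_fin_two]
  norm_num [E21, add_comm]

private lemma E12_inv (a : F) : (E12 a)⁻¹ = E12 (-a) := by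
  rw [inv_eq_iff_mul_eq_one, E12_mul]
  apply Subtype.ext
  simp [E12, Matrix.one_fin_two]

private lemma E21_inv (a : F) : (E21 a)⁻¹ = E21 (-a) := by
  rw [inv_eq_iff_mul_eq_one, E21_mul]
  apply Subtype.ext
  simp [E21, Matrix.one_fin_two]

private def D2 (h2 : (2:F) ≠ 0) : Matrix.SpecialLinearGroup (Fin 2) F :=
  ⟨!![(2:F), 0; 0, 2⁻¹], by simp [Matrix.det_fin_two_of, mul_inv_cancel₀ h2]⟩

private lemma D2_inv (h2 : (2:F) ≠ 0) :
    (D2 h2)⁻¹ = ⟨!![(2:F)⁻¹, 0; 0, 2], by simp [Matrix.det_fin_two_of, inv_mul_cancel₀ h2]⟩ := by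
  apply inv_eq_of_mul_eq_one_right
  apply Subtype.ext
  show (!![(2:F), 0; 0, 2⁻¹] : Matrix (Fin 2) (Fin 2) F) * !![(2:F)⁻¹, 0; 0, 2] = _
  rw [Matrix.mul_fin_two, show ((1 : Matrix.SpecialLinearGroup (Fin 2) F) : Matrix (Fin 2) (Fin 2) F) = !![1,0;0,1] by rw [Matrix.SpecialLinearGroup.coe_one, Matrix.one_fin_two]]
  norm_num [mul_inv_cancel₀ h2, inv_mul_cancel₀ h2]

private lemma E12_comm (h2 : (2:F) ≠ 0) (b : F) :
    ⁅D2 h2, E12 b⁆ = E12 (3 * b) := by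
  rw [commutatorElement_def, D2_inv, E12_inv]
  apply Subtype.ext
  show (!![(2:F), 0; 0, 2⁻¹] * !![1, b; 0, 1] * !![(2:F)⁻¹, 0; 0, 2] * !![1, -b; 0, 1]
      : Matrix (Fin 2) (Fin 2) F) = !![1, 3*b; 0, 1]
  rw [Matrix.mul_fin_two, Matrix.mul_fin_two, Matrix.mul_fin_two]
  norm_num [mul_inv_cancel₀ h2, inv_mul_cancel₀ h2]
  ring

private lemma E21_comm (h2 : (2:F) ≠ 0) (b : F) :
    ⁅D2 h2, E21 b⁆ = E21 (2⁻¹ * (2⁻¹ * b) - b) := by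
  rw [commutatorElement_def, D2_inv, E21_inv]
  apply Subtype.ext
  show (!![(2:F), 0; 0, 2⁻¹] * !![1, 0; b, 1] * !![(2:F)⁻¹, 0; 0, 2] * !![1, 0; -b, 1]
      : Matrix (Fin 2) (Fin 2) F) = !![1, 0; 2⁻¹ * (2⁻¹ * b) - b, 1]
  rw [Matrix.mul_fin_two, Matrix.mul_fin_two, Matrix.mul_fin_two]
  norm_num [mul_inv_cancel₀ h2, inv_mul_cancel₀ h2]
  ring

private lemma E12_mem (h2 : (2:F) ≠ 0) (h3 : (3:F) ≠ 0) (a : F) :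
    E12 a ∈ commutator (Matrix.SpecialLinearGroup (Fin 2) F) := by
  have : E12 a = ⁅D2 h2, E12 (a / 3)⁆ := by
    rw [E12_comm h2]
    congr 1
    field_simp
  rw [this, commutator_def]
  exact Subgroup.commutator_mem_commutator (Subgroup.mem_top _) (Subgroup.mem_top _)

private lemma E21_mem (h2 : (2:F) ≠ 0) (h3 : (3:F) ≠ 0) (a : F) :
    E21 a ∈ commutator (Matrix.SpecialLinearGroup (Fin 2) F) := by
  have : E21 a = ⁅D2 h2, E21 (-(4 * a) / 3)⁆ := by
    rw [E21_comm h2]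
    congr 1
    have h4 : (4:F) ≠ 0 := by
      intro h
      apply h2
      have : (4:F) = 2 * 2 := by norm_num
      rcases mul_eq_zero.mp (this ▸ h) with h' | h' <;> exact h'
    field_simp
    ring
  rw [this, commutator_def]
  exact Subgroup.commutator_mem_commutator (Subgroup.mem_top _) (Subgroup.mem_top _)

private lemma decomp (g : Matrix.SpecialLinearGroup (Fin 2) F) (hc : (g : Matrix (Fin 2) (Fin 2) F) 1 0 ≠ 0) :
    g = E12 (((g : Matrix (Fin 2) (Fin 2) F) 0 0 - 1) / (g : Matrix (Fin 2) (Fin 2) F) 1 0)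
      * E21 ((g : Matrix (Fin 2) (Fin 2) F) 1 0)
      * E12 (((g : Matrix (Fin 2) (Fin 2) F) 1 1 - 1) / (g : Matrix (Fin 2) (Fin 2) F) 1 0) := by
  have hdet : (g : Matrix (Fin 2) (Fin 2) F) 0 0 * (g : Matrix (Fin 2) (Fin 2) F) 1 1
      - (g : Matrix (Fin 2) (Fin 2) F) 0 1 * (g : Matrix (Fin 2) (Fin 2) F) 1 0 = 1 := by
    rw [← Matrix.det_fin_two]; exact g.prop
  apply Subtype.ext
  rw [Matrix.SpecialLinearGroup.coe_mul, Matrix.SpecialLinearGroup.coe_mul]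
  show (g : Matrix (Fin 2) (Fin 2) F) = !![1, _; 0, 1] * !![1, 0; _, 1] * !![1, _; 0, 1]
  rw [Matrix.mul_fin_two, Matrix.mul_fin_two]
  ext i j
  fin_cases i <;> fin_cases j <;> simp <;> (try field_simp) <;> (first | linear_combination hdet | linear_combination -hdet | linear_combination 2*hdet | linear_combination -2*hdet | ring1)

private lemma E21_zero : (E21 (0:F)) = 1 := by
  apply Subtype.ext
  show (!![1, 0; 0, 1] : Matrix (Fin 2) (Fin 2) F) = _
  rw [Matrix.SpecialLinearGroup.coe_one, Matrix.one_fin_two]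

private lemma mem_commutator_of_ne (h2 : (2:F) ≠ 0) (h3 : (3:F) ≠ 0)
    (g : Matrix.SpecialLinearGroup (Fin 2) F)
    (hc : (g : Matrix (Fin 2) (Fin 2) F) 1 0 ≠ 0) :
    g ∈ commutator (Matrix.SpecialLinearGroup (Fin 2) F) := by
  rw [decomp g hc]
  exact Subgroup.mul_mem _ (Subgroup.mul_mem _ (E12_mem h2 h3 _) (E21_mem h2 h3 _)) (E12_mem h2 h3 _)

private lemma mem_commutator (h2 : (2:F) ≠ 0) (h3 : (3:F) ≠ 0)
    (g : Matrix.SpecialLinearGroup (Fin 2) F) :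
    g ∈ commutator (Matrix.SpecialLinearGroup (Fin 2) F) := by
  by_cases hc : (g : Matrix (Fin 2) (Fin 2) F) 1 0 ≠ 0
  · exact mem_commutator_of_ne h2 h3 g hc
  · push_neg at hc
    have hdet : (g : Matrix (Fin 2) (Fin 2) F) 0 0 * (g : Matrix (Fin 2) (Fin 2) F) 1 1
        - (g : Matrix (Fin 2) (Fin 2) F) 0 1 * (g : Matrix (Fin 2) (Fin 2) F) 1 0 = 1 := by
      rw [← Matrix.det_fin_two]; exact g.prop
    have hne : ((g * E21 1 : Matrix.SpecialLinearGroup (Fin 2) F) :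
        Matrix (Fin 2) (Fin 2) F) 1 0 ≠ 0 := by
      rw [Matrix.SpecialLinearGroup.coe_mul]
      show (((g : Matrix (Fin 2) (Fin 2) F) * !![1, 0; 1, 1] : Matrix (Fin 2) (Fin 2) F)) 1 0 ≠ 0
      simp [Matrix.mul_apply, Fin.sum_univ_two]
      intro h
      have h11 : (g : Matrix (Fin 2) (Fin 2) F) 1 1 = 0 := by linear_combination h - hc
      rw [hc, h11] at hdet
      simp at hdet
    have : g = (g * E21 1) * E21 (-1) := by
      rw [mul_assoc, E21_mul]
      norm_num [E21_zero]
    rw [this]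
    exact Subgroup.mul_mem _ (mem_commutator_of_ne h2 h3 _ hne) (E21_mem h2 h3 _)

private lemma SL2_not_solvable (h2 : (2:F) ≠ 0) (h3 : (3:F) ≠ 0) :
    ¬ IsSolvable (Matrix.SpecialLinearGroup (Fin 2) F) := by
  have htop : ∀ n, derivedSeries (Matrix.SpecialLinearGroup (Fin 2) F) n = ⊤ := by
    intro n
    induction n with
    | zero => rfl
    | succ n ih =>
      rw [derivedSeries_succ, ih]
      rw [eq_top_iff]
      intro g _
      exact mem_commutator h2 h3 g
  intro h
  obtain ⟨n, hn⟩ := (isSolvable_def _).mp h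
  rw [htop n] at hn
  have : E12 (1:F) = 1 := by
    have := Subgroup.mem_bot.mp (hn ▸ Subgroup.mem_top (E12 (1:F)))
    exact this
  have h01 := congrFun (congrFun (congrArg Subtype.val this) 0) 1
  simp [E12, Matrix.SpecialLinearGroup.coe_one] at h01

end SL2

/-- Let `p ≥ 5` be prime and let `ρ : Gal(ℚ̄/ℚ) → GL₂(𝔽_p)` be the mod-`p`
representation of an elliptic curve `E/ℚ`, whose image contains `SL₂(𝔽_p)` (in particular it is
non-solvable).  Then for every solvable Galois extension `L/ℚ` — corresponding to a normal
subgroup `Λ = Gal(ℚ̄/L)` of the absolute Galois group `Γ` with `Γ/Λ` solvable — the group of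
`p`-torsion points `E[p](L)`, i.e. the group of vectors of `𝔽_p²` fixed by `ρ(Λ)`,
is trivial. -/
theorem no_p_torsion_over_solvable_extensions
    (p : ℕ) [Fact p.Prime] (hp5 : 5 ≤ p)
    (Γ : Type) [Group Γ]
    (ρ : Γ →* Matrix.GeneralLinearGroup (Fin 2) (ZMod p))
    (hIm : ∀ g : Matrix.SpecialLinearGroup (Fin 2) (ZMod p),
      ∃ γ : Γ, ρ γ = Matrix.SpecialLinearGroup.toGL g)
    (Λ : Subgroup Γ) [Λ.Normal] (hsolv : IsSolvable (Γ ⧸ Λ)) :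
    ∀ v : Fin 2 → ZMod p,
      (∀ lam ∈ Λ, ((ρ lam : Matrix (Fin 2) (Fin 2) (ZMod p))).mulVec v = v) →
      v = 0 := by
  intro w hw
  by_contra hw0
  have hdvd : ∀ n : ℕ, 0 < n → n < 5 → ((n : ZMod p) ≠ 0) := by
    intro n hn h5 h0
    have hnd : ¬ (p ∣ n) := fun hd => absurd (Nat.le_of_dvd hn hd) (by omega)
    exact hnd ((ZMod.natCast_eq_zero_iff n p).mp h0)
  have h2 : (2 : ZMod p) ≠ 0 := by
    have := hdvd 2 (by norm_num) (by norm_num); simpa using this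
  have h3 : (3 : ZMod p) ≠ 0 := by
    have := hdvd 3 (by norm_num) (by norm_num); simpa using this
  -- The stabilizer subgroup of w in SL₂ is abelian, hence solvable
  let K : Subgroup (Matrix.SpecialLinearGroup (Fin 2) (ZMod p)) :=
  { carrier := {g | (g : Matrix (Fin 2) (Fin 2) (ZMod p)).mulVec w = w}
    one_mem' := by ext i; fin_cases i <;> simp
    mul_mem' := by
      intro a b ha hb
      show ((a * b : Matrix.SpecialLinearGroup (Fin 2) (ZMod p))
          : Matrix (Fin 2) (Fin 2) (ZMod p)).mulVec w = w
      rw [Matrix.SpecialLinearGroup.coe_mul, ← Matrix.mulVec_mulVec, hb, ha]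
    inv_mem' := by
      intro a ha
      show ((a⁻¹ : Matrix.SpecialLinearGroup (Fin 2) (ZMod p))
          : Matrix (Fin 2) (Fin 2) (ZMod p)).mulVec w = w
      have hcoe : ((a⁻¹ : Matrix.SpecialLinearGroup (Fin 2) (ZMod p))
          : Matrix (Fin 2) (Fin 2) (ZMod p)) * (a : Matrix (Fin 2) (Fin 2) (ZMod p)) = 1 := by
        rw [← Matrix.SpecialLinearGroup.coe_mul, inv_mul_cancel,
          Matrix.SpecialLinearGroup.coe_one]
      conv_lhs => rw [← ha]
      rw [Matrix.mulVec_mulVec, hcoe, Matrix.one_mulVec] }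
  have hKcomm : ∀ a b : K, a * b = b * a := by
    rintro ⟨a, ha⟩ ⟨b, hb⟩
    apply Subtype.ext
    apply Subtype.ext
    show ((a : Matrix (Fin 2) (Fin 2) (ZMod p)) * b)
        = (b : Matrix (Fin 2) (Fin 2) (ZMod p)) * a
    exact fix_comm hw0 a.prop b.prop ha hb
  haveI hKsolv : Group.IsSolvable K := isSolvable_of_comm hKcomm
  -- map SL₂ into ρ.range
  have hmem : ∀ g : Matrix.SpecialLinearGroup (Fin 2) (ZMod p),
      Matrix.SpecialLinearGroup.toGL g ∈ ρ.range := by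
    intro g; obtain ⟨γ, hγ⟩ := hIm g; exact ⟨γ, hγ⟩
  let φ : Matrix.SpecialLinearGroup (Fin 2) (ZMod p) →* ρ.range :=
    (Matrix.SpecialLinearGroup.toGL).codRestrict ρ.range hmem
  -- the normal subgroup of ρ.range corresponding to Λ
  let N : Subgroup ρ.range := (Λ.map ρ).subgroupOf ρ.range
  haveI hN : N.Normal := by
    constructor
    intro n hn r
    rw [Subgroup.mem_subgroupOf] at hn ⊢
    obtain ⟨l, hl, hl2⟩ := hn
    obtain ⟨γ, hγ⟩ := r.prop
    refine ⟨γ * l * γ⁻¹, Subgroup.Normal.conj_mem ‹Λ.Normal› l hl γ, ?_⟩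
    push_cast
    rw [_root_.map_mul, _root_.map_mul, map_inv, hγ, hl2]
  -- ρ.range ⧸ N is solvable since it receives a surjection from Γ ⧸ Λ
  have hker : Λ ≤ ((QuotientGroup.mk' N).comp ρ.rangeRestrict).ker := by
    intro l hl
    rw [MonoidHom.mem_ker, MonoidHom.comp_apply, QuotientGroup.mk'_apply,
      QuotientGroup.eq_one_iff]
    rw [Subgroup.mem_subgroupOf]
    exact ⟨l, hl, rfl⟩
  let ψ : (Γ ⧸ Λ) →* (ρ.range ⧸ N) := QuotientGroup.lift Λ
    ((QuotientGroup.mk' N).comp ρ.rangeRestrict) hker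
  have hψsurj : Function.Surjective ψ := by
    intro q
    induction q using QuotientGroup.induction_on with
    | H r =>
      obtain ⟨γ, hγ⟩ := MonoidHom.rangeRestrict_surjective ρ r
      exact ⟨QuotientGroup.mk γ, by simp [ψ, hγ]⟩
  haveI : Group.IsSolvable (Γ ⧸ Λ) := hsolv
  haveI hQsolv : Group.IsSolvable (ρ.range ⧸ N) := solvable_of_surjective hψsurj
  -- the composite SL₂ → ρ.range ⧸ N has kernel inside K
  let σ : Matrix.SpecialLinearGroup (Fin 2) (ZMod p) →* (ρ.range ⧸ N) :=
    (QuotientGroup.mk' N).comp φ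
  have hσker : σ.ker ≤ K.subtype.range := by
    intro x hx
    rw [MonoidHom.mem_ker, MonoidHom.comp_apply, QuotientGroup.mk'_apply,
      QuotientGroup.eq_one_iff, Subgroup.mem_subgroupOf] at hx
    obtain ⟨l, hl, hl2⟩ := hx
    rw [Subgroup.range_subtype]
    show (x : Matrix (Fin 2) (Fin 2) (ZMod p)).mulVec w = w
    have hmat : ((ρ l : Matrix.GeneralLinearGroup (Fin 2) (ZMod p))
        : Matrix (Fin 2) (Fin 2) (ZMod p)) = (x : Matrix (Fin 2) (Fin 2) (ZMod p)) := by
      have h' : ρ l = Matrix.SpecialLinearGroup.toGL x := hl2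
      rw [h']
      rfl
    rw [← hmat]
    exact hw l hl
  haveI : IsSolvable (Matrix.SpecialLinearGroup (Fin 2) (ZMod p)) :=
    solvable_of_ker_le_range K.subtype σ hσker
  exact SL2_not_solvable h2 h3 this
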